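/- Let L be a full-rank lattice and let L_i be the sublattice generated by the i-th connected component of the graph of length-indecomposable vectors (adjacency: nonzero inner product). Then each L_i is indecomposable, i.e., L_i cannot be written as an orthogonal direct sum of two nonzero sublattices. -/

import Mathlib

open Submodule
open scoped RealInnerProductSpace

noncomputable section

/-- A full-rank lattice in `d`-dimensional Euclidean space: the `ℤ`-span of an `ℝ`-basis. -/
def IsFullLattice (d : ℕ) (L : Submodule ℤ (EuclideanSpace ℝ (Fin d))) : Prop :=
  ∃ b : Module.Basis (Fin d) ℝ (EuclideanSpace ℝ (Fin d)), L = Submodule.span ℤ (Set.range b)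

/-- `v` is length decomposable in `L`: `v = x + y` with `x, y ∈ L` nonzero and
`‖x‖ ≤ ‖v‖`, `‖y‖ ≤ ‖v‖`. -/
def LengthDecomposable {E : Type*} [NormedAddCommGroup E] [InnerProductSpace ℝ E]
    (L : Submodule ℤ E) (v : E) : Prop :=
  ∃ x y : E, x ∈ L ∧ y ∈ L ∧ x ≠ 0 ∧ y ≠ 0 ∧ v = x + y ∧ ‖x‖ ≤ ‖v‖ ∧ ‖y‖ ≤ ‖v‖

/-- The set of length-indecomposable vectors of a lattice `L`. -/
def indecompSet {E : Type*} [NormedAddCommGroup E] [InnerProductSpace ℝ E]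
    (L : Submodule ℤ E) : Set E :=
  {v | v ∈ L ∧ v ≠ 0 ∧ ¬LengthDecomposable L v}

/-- The graph on the length-indecomposable vectors of `L`, where two distinct vectors are
adjacent iff their inner product is nonzero. -/
def indecompGraph {E : Type*} [NormedAddCommGroup E] [InnerProductSpace ℝ E]
    (L : Submodule ℤ E) : SimpleGraph (indecompSet L) where
  Adj v w := v ≠ w ∧ ⟪(v : E), (w : E)⟫ ≠ 0
  symm := by
    constructor
    intro v w h
    exact ⟨h.1.symm, fun hz => h.2 (by rwa [real_inner_comm])⟩
  loopless := by constructor; intro v h; exact h.1 rfl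

/-- The sublattice of `L` generated by the vertex set of a connected component of the graph of
length-indecomposable vectors. -/
def componentLattice {E : Type*} [NormedAddCommGroup E] [InnerProductSpace ℝ E]
    (L : Submodule ℤ E) (c : (indecompGraph L).ConnectedComponent) : Submodule ℤ E :=
  Submodule.span ℤ (Subtype.val '' {v : indecompSet L | (indecompGraph L).connectedComponentMk v = c})


/-- A lattice `M` is decomposable if it is the orthogonal direct sum of two nonzero
sublattices. -/
def Decomposable {E : Type*} [NormedAddCommGroup E] [InnerProductSpace ℝ E]
    (M : Submodule ℤ E) : Prop :=
  ∃ M₁ M₂ : Submodule ℤ E, M₁ ≠ ⊥ ∧ M₂ ≠ ⊥ ∧ M₁ ⊔ M₂ = M ∧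
    ∀ x ∈ M₁, ∀ y ∈ M₂, ⟪x, y⟫ = 0

/-- For a full-rank lattice `L`, the sublattice generated by a connected component of the
graph of length-indecomposable vectors is indecomposable. -/
theorem componentLattice_indecomposable
    (d : ℕ) (L : Submodule ℤ (EuclideanSpace ℝ (Fin d))) (hL : IsFullLattice d L)
    (c : (indecompGraph L).ConnectedComponent) :
    ¬Decomposable (componentLattice L c) := by
  rintro ⟨M₁, M₂, h1, h2, hsup, horth⟩
  -- the generating set lies in L
  have hML : componentLattice L c ≤ L := by
    apply span_le.mpr
    rintro x ⟨v, -, rfl⟩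
    exact v.2.1
  -- symmetric key argument
  have hkey : ∀ Ma Mb : Submodule ℤ (EuclideanSpace ℝ (Fin d)),
      Ma ⊔ Mb = componentLattice L c →
      (∀ x ∈ Ma, ∀ y ∈ Mb, ⟪x, y⟫ = 0) → Mb ≠ ⊥ →
      ∀ w : indecompSet L, (indecompGraph L).connectedComponentMk w = c →
      (w : EuclideanSpace ℝ (Fin d)) ∈ Ma → False := by
    intro Ma Mb hsup horth hb w hwc hwa
    -- every vertex of the component lies in Ma or Mb
    have hsplit : ∀ v : indecompSet L, (indecompGraph L).connectedComponentMk v = c →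
        (v : EuclideanSpace ℝ (Fin d)) ∈ Ma ∨ (v : EuclideanSpace ℝ (Fin d)) ∈ Mb := by
      intro v hv
      have hvM : (v : EuclideanSpace ℝ (Fin d)) ∈ componentLattice L c :=
        subset_span ⟨v, hv, rfl⟩
      rw [← hsup] at hvM
      obtain ⟨x, hx, y, hy, hxy⟩ := Submodule.mem_sup.mp hvM
      by_cases hx0 : x = 0
      · right; rw [← hxy, hx0, zero_add]; exact hy
      by_cases hy0 : y = 0
      · left; rw [← hxy, hy0, add_zero]; exact hx
      exfalso
      apply v.2.2.2
      have hxL : x ∈ L := hML (hsup ▸ Submodule.mem_sup_left hx)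
      have hyL : y ∈ L := hML (hsup ▸ Submodule.mem_sup_right hy)
      have ho : ⟪x, y⟫ = 0 := horth x hx y hy
      have hnorm : ‖(v : EuclideanSpace ℝ (Fin d))‖ ^ 2 = ‖x‖ ^ 2 + ‖y‖ ^ 2 := by
        rw [← hxy, norm_add_sq_real, ho]; ring
      refine ⟨x, y, hxL, hyL, hx0, hy0, hxy.symm, ?_, ?_⟩
      · nlinarith [norm_nonneg x, norm_nonneg y, norm_nonneg (v : EuclideanSpace ℝ (Fin d))]
      · nlinarith [norm_nonneg x, norm_nonneg y, norm_nonneg (v : EuclideanSpace ℝ (Fin d))]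
    -- walk induction: membership in Ma propagates along edges
    have hstep : ∀ a b : indecompSet L, (indecompGraph L).Walk a b →
        (indecompGraph L).connectedComponentMk a = c →
        (a : EuclideanSpace ℝ (Fin d)) ∈ Ma →
        (b : EuclideanSpace ℝ (Fin d)) ∈ Ma := by
      intro a b p
      induction p with
      | nil => exact fun _ h => h
      | @cons a x b hadj p ih =>
        intro hac ha
        have hxc : (indecompGraph L).connectedComponentMk x = c := by
          rw [← hac]
          exact (SimpleGraph.ConnectedComponent.sound hadj.reachable).symm
        refine ih hxc ?_
        rcases hsplit x hxc with hx | hx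
        · exact hx
        · exact absurd (horth a ha x hx) hadj.2
    -- hence all vertices of the component lie in Ma
    have hall : ∀ v : indecompSet L, (indecompGraph L).connectedComponentMk v = c →
        (v : EuclideanSpace ℝ (Fin d)) ∈ Ma := by
      intro v hv
      have hr : (indecompGraph L).Reachable w v := by
        apply SimpleGraph.ConnectedComponent.exact
        rw [hwc, hv]
      exact hr.elim fun p => hstep w v p hwc hwa
    have hMa : componentLattice L c ≤ Ma := by
      apply span_le.mpr
      rintro x ⟨v, hv, rfl⟩
      exact hall v hv
    obtain ⟨y, hy, hy0⟩ := (Submodule.ne_bot_iff Mb).mp hb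
    have hya : y ∈ Ma := hMa (hsup ▸ Submodule.mem_sup_right hy)
    exact hy0 (inner_self_eq_zero.mp (horth y hya y hy))
  -- find a representative vertex of the component
  obtain ⟨w, hw⟩ := c.exists_rep
  rcases (by
    have hvM : (w : EuclideanSpace ℝ (Fin d)) ∈ componentLattice L c :=
      subset_span ⟨w, hw, rfl⟩
    rw [← hsup] at hvM
    obtain ⟨x, hx, y, hy, hxy⟩ := Submodule.mem_sup.mp hvM
    by_cases hx0 : x = 0
    · exact Or.inr (by rw [← hxy, hx0, zero_add]; exact hy)
    by_cases hy0 : y = 0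
    · exact Or.inl (by rw [← hxy, hy0, add_zero]; exact hx)
    exfalso
    apply w.2.2.2
    have hxL : x ∈ L := hML (hsup ▸ Submodule.mem_sup_left hx)
    have hyL : y ∈ L := hML (hsup ▸ Submodule.mem_sup_right hy)
    have ho : ⟪x, y⟫ = 0 := horth x hx y hy
    have hnorm : ‖(w : EuclideanSpace ℝ (Fin d))‖ ^ 2 = ‖x‖ ^ 2 + ‖y‖ ^ 2 := by
      rw [← hxy, norm_add_sq_real, ho]; ring
    refine ⟨x, y, hxL, hyL, hx0, hy0, hxy.symm, ?_, ?_⟩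
    · nlinarith [norm_nonneg x, norm_nonneg y, norm_nonneg (w : EuclideanSpace ℝ (Fin d))]
    · nlinarith [norm_nonneg x, norm_nonneg y, norm_nonneg (w : EuclideanSpace ℝ (Fin d))]
      : (w : EuclideanSpace ℝ (Fin d)) ∈ M₁ ∨ (w : EuclideanSpace ℝ (Fin d)) ∈ M₂)
    with hw1 | hw2
  · exact hkey M₁ M₂ hsup horth h2 w hw hw1
  · exact hkey M₂ M₁ (by rw [sup_comm]; exact hsup)
      (fun x hx y hy => by rw [real_inner_comm]; exact horth y hy x hx) h1 w hw hw2
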